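/- Let c_j^{(n)} be the coefficient of z^j in (1+z)(1+2z)···(1+(n−1)z). For every fixed j ≥ 1, c_{n−j}^{(n)} ≤ (n−1)! · (1 + log(n−1))^{j−1} for all n ≥ 2. In particular, for each fixed j, c_{n−j}^{(n)}/n! → 0 as n → ∞. -/

import Mathlib

open Finset Filter Topology Polynomial

/-- The polynomial `p_n(z) = (1+z)(1+2z)···(1+(n-1)z)`. -/
noncomputable def p (n : ℕ) : Polynomial ℝ :=
  ∏ k ∈ Finset.Icc 1 (n - 1), (Polynomial.C (k : ℝ) * Polynomial.X + 1)

lemma p_succ {n : ℕ} (hn : 1 ≤ n) : p (n+1) = p n * (C (n:ℝ) * X + 1) := by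
  unfold p
  rw [show n + 1 - 1 = (n-1) + 1 from by omega, Finset.prod_Icc_succ_top (by omega),
    Nat.sub_add_cancel hn]

lemma coeff_mul_linear (q : Polynomial ℝ) (a : ℝ) (i : ℕ) :
    (q * (C a * X + 1)).coeff (i+1) = q.coeff i * a + q.coeff (i+1) := by
  rw [mul_add, mul_one, Polynomial.coeff_add, ← mul_assoc, Polynomial.coeff_mul_X,
    Polynomial.coeff_mul_C]

lemma p_coeff_zero (n : ℕ) : (p n).coeff 0 = 1 := by
  simp [p, Polynomial.coeff_zero_eq_eval_zero, Polynomial.eval_prod]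

lemma p_coeff_nonneg (n i : ℕ) : 0 ≤ (p n).coeff i := by
  refine Finset.prod_induction _ (fun q : Polynomial ℝ => ∀ i, 0 ≤ q.coeff i) ?_ ?_ ?_ i
  · intro a b ha hb i
    rw [Polynomial.coeff_mul]
    exact Finset.sum_nonneg fun x _ => mul_nonneg (ha _) (hb _)
  · intro i
    rcases i with _ | i <;> simp [Polynomial.coeff_one]
  · intro k _ i
    rcases i with _ | _ | i <;> simp [Polynomial.coeff_one]

lemma p_natDegree_le (n : ℕ) : (p n).natDegree ≤ n - 1 := by
  refine (Polynomial.natDegree_prod_le _ _).trans ?_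
  have h1 : ∀ k : ℕ, (C (k:ℝ) * X + 1).natDegree ≤ 1 := by
    intro k
    refine (Polynomial.natDegree_add_le _ _).trans ?_
    simp only [Polynomial.natDegree_one, max_le_iff]
    refine ⟨(Polynomial.natDegree_C_mul_le _ _).trans ?_, Nat.zero_le _⟩
    simp
  refine (Finset.sum_le_sum (fun k _ => h1 k)).trans ?_
  simp

lemma one_le_harmonic {n : ℕ} (hn : 1 ≤ n) : (1:ℚ) ≤ harmonic n := by
  unfold harmonic
  push_cast
  calc (1:ℚ) = (((0:ℕ):ℚ)+1)⁻¹ := by norm_num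
  _ ≤ ∑ i ∈ Finset.range n, ((i:ℚ)+1)⁻¹ :=
      Finset.single_le_sum (f := fun i : ℕ => ((i:ℚ)+1)⁻¹) (fun i _ => by positivity) (Finset.mem_range.mpr hn)

lemma key : ∀ n : ℕ, 2 ≤ n → ∀ j : ℕ, 1 ≤ j →
    (p n).coeff (n - j) ≤ (Nat.factorial (n-1) : ℝ) * ((harmonic (n-1) : ℝ)) ^ (j-1) := by
  intro n hn
  induction n, hn using Nat.le_induction with
  | base =>
    intro j hj
    have hp2 : p 2 = X + 1 := by
      simp [p]
    have hH : ((harmonic (2-1) : ℚ) : ℝ) = 1 := by norm_num [harmonic]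
    have hF : (((2-1 : ℕ)).factorial : ℝ) = 1 := by norm_num
    rw [hp2, hH, hF, one_pow, one_mul]
    rcases Nat.lt_or_ge j 2 with h | h
    · interval_cases j
      simp [Polynomial.coeff_one]
    · rw [show 2 - j = 0 from by omega]
      simp [Polynomial.coeff_one]
  | succ n hn ih =>
    intro j hj
    have hfac : ((n+1-1).factorial : ℝ) = n * ((n-1).factorial : ℝ) := by
      rw [show n+1-1 = n from rfl]
      rw_mod_cast [← Nat.mul_factorial_pred (by omega)]
    have en : n - 1 + 1 = n := by omega
    have hHn : ((harmonic (n+1-1) : ℚ) : ℝ) = (harmonic (n-1) : ℝ) + (n:ℝ)⁻¹ := by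
      rw [show n+1-1 = (n-1)+1 from by omega, harmonic_succ, en]
      push_cast
      ring
    have hH0 : (0:ℝ) ≤ (harmonic (n-1) : ℝ) := by
      rcases Nat.eq_zero_or_pos (n-1) with h | h
      · simp [h]
      · exact_mod_cast (harmonic_pos (by omega)).le
    by_cases hjn : n + 1 ≤ j
    · rw [show n + 1 - j = 0 from by omega, p_coeff_zero, hHn]
      have h1 : (1:ℝ) ≤ (harmonic (n-1) : ℝ) + (n:ℝ)⁻¹ := by
        have := one_le_harmonic (n := n) (by omega)
        have h2 : ((harmonic ((n-1)+1) : ℚ):ℝ) = (harmonic (n-1) : ℝ) + (n:ℝ)⁻¹ := by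
          rw [harmonic_succ, en]
          push_cast
          ring
        rw [en] at h2
        rw [← h2]; exact_mod_cast this
      have h2 : (1:ℝ) ≤ ((n+1-1).factorial : ℝ) := by exact_mod_cast Nat.one_le_iff_ne_zero.mpr (Nat.factorial_ne_zero _)
      calc (1:ℝ) = 1 * 1 := by ring
        _ ≤ _ := by
          apply mul_le_mul h2 (one_le_pow₀ h1) zero_le_one (by positivity)
    · push_neg at hjn
      rw [p_succ (by omega), show n + 1 - j = (n - j) + 1 from by omega, coeff_mul_linear]
      rcases eq_or_lt_of_le hj with h1 | h2
      · -- j = 1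
        subst h1
        have hc : (p n).coeff (n - 1 + 1) = 0 := by
          rw [en]
          exact Polynomial.coeff_eq_zero_of_natDegree_lt
            (lt_of_le_of_lt (p_natDegree_le n) (by omega))
        have i1 := ih 1 le_rfl
        simp only [show (1:ℕ)-1 = 0 from rfl, pow_zero, mul_one] at i1 ⊢
        rw [hc, add_zero, hfac]
        calc (p n).coeff (n-1) * (n:ℝ)
            ≤ ((n-1).factorial : ℝ) * n := mul_le_mul_of_nonneg_right i1 (by positivity)
          _ = (n:ℝ) * ((n-1).factorial : ℝ) := by ring
      · -- j ≥ 2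
        have hj2 : 2 ≤ j := h2
        have e1 : n - j + 1 = n - (j-1) := by omega
        have i1 := ih j hj
        have i2 := ih (j-1) (by omega)
        rw [e1]
        rw [hfac, hHn]
        have hb : (harmonic (n-1) : ℝ) ^ (j-1-1) * ((harmonic (n-1) : ℝ) + (n:ℝ)⁻¹)
            ≤ ((harmonic (n-1) : ℝ) + (n:ℝ)⁻¹) ^ (j-1) := by
          rw [show j - 1 = (j-1-1) + 1 from by omega, pow_succ]
          have hgr : (harmonic (n-1) : ℝ) ≤ (harmonic (n-1) : ℝ) + (n:ℝ)⁻¹ := by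
            have : (0:ℝ) ≤ (n:ℝ)⁻¹ := by positivity
            linarith
          have hpl : (harmonic (n-1) : ℝ) ^ (j-1-1) ≤ ((harmonic (n-1) : ℝ) + (n:ℝ)⁻¹) ^ (j-1-1) :=
            pow_le_pow_left₀ hH0 hgr _
          exact mul_le_mul_of_nonneg_right hpl (le_trans hH0 hgr)
        have hnpos : (0:ℝ) < (n:ℝ) := by positivity
        have hpow : (harmonic (n-1) : ℝ)^(j-1) = (harmonic (n-1) : ℝ)^(j-1-1) * (harmonic (n-1) : ℝ) := by
          rw [← pow_succ, show j-1-1+1 = j-1 from by omega]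
        have hF : (0:ℝ) < ((n-1).factorial : ℝ) := by exact_mod_cast Nat.factorial_pos _
        calc (p n).coeff (n-j) * (n:ℝ) + (p n).coeff (n - (j-1))
            ≤ (((n-1).factorial : ℝ) * (harmonic (n-1) : ℝ)^(j-1)) * n
              + ((n-1).factorial : ℝ) * (harmonic (n-1) : ℝ)^(j-1-1) :=
              add_le_add (mul_le_mul_of_nonneg_right i1 hnpos.le) i2
          _ = ((n:ℝ) * ((n-1).factorial : ℝ))
              * ((harmonic (n-1) : ℝ)^(j-1-1) * ((harmonic (n-1) : ℝ) + (n:ℝ)⁻¹)) := by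
              rw [hpow]
              field_simp
          _ ≤ ((n:ℝ) * ((n-1).factorial : ℝ)) * ((harmonic (n-1) : ℝ) + (n:ℝ)⁻¹) ^ (j-1) :=
              mul_le_mul_of_nonneg_left hb (by positivity)

lemma tendsto_one_add_log_pow_div (k : ℕ) :
    Tendsto (fun x : ℝ => (1 + Real.log x)^k / x) atTop (𝓝 0) := by
  have hg : Tendsto (fun x : ℝ => (2:ℝ)^k * (Real.log x ^ k / x)) atTop (𝓝 0) := by
    have := (Real.tendsto_pow_log_div_mul_add_atTop 1 0 k one_ne_zero)
    simp only [one_mul, add_zero] at this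
    simpa using this.const_mul ((2:ℝ)^k)
  refine squeeze_zero' ?_ ?_ hg
  · filter_upwards [eventually_ge_atTop (Real.exp 1)] with x hx
    have hx0 : (0:ℝ) < x := lt_of_lt_of_le (Real.exp_pos 1) hx
    have hl : (1:ℝ) ≤ Real.log x := by
      rw [Real.le_log_iff_exp_le hx0]; exact hx
    positivity
  · filter_upwards [eventually_ge_atTop (Real.exp 1)] with x hx
    have hx0 : (0:ℝ) < x := lt_of_lt_of_le (Real.exp_pos 1) hx
    have hl : (1:ℝ) ≤ Real.log x := by
      rw [Real.le_log_iff_exp_le hx0]; exact hx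
    have h1 : (1 + Real.log x)^k ≤ (2 * Real.log x)^k :=
      pow_le_pow_left₀ (by linarith) (by linarith) _
    calc (1 + Real.log x)^k / x ≤ (2 * Real.log x)^k / x := by
          exact div_le_div_of_nonneg_right h1 hx0.le
      _ = (2:ℝ)^k * (Real.log x ^ k / x) := by rw [mul_pow]; ring

/-- For every fixed `j ≥ 1`: `c_{n-j}^{(n)} ≤ (n-1)!·(1 + log(n-1))^{j-1}` for all `n ≥ 2`,
and consequently `c_{n-j}^{(n)}/n! → 0` as `n → ∞`. -/
theorem coeff_near_top_estimate (j : ℕ) (hj : 1 ≤ j) :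
    (∀ n : ℕ, 2 ≤ n →
      (p n).coeff (n - j) ≤ (Nat.factorial (n - 1) : ℝ) * (1 + Real.log (n - 1)) ^ (j - 1)) ∧
    Tendsto (fun n : ℕ => (p n).coeff (n - j) / (Nat.factorial n : ℝ)) atTop (𝓝 0) := by
  have part1 : ∀ n : ℕ, 2 ≤ n →
      (p n).coeff (n - j) ≤ (Nat.factorial (n - 1) : ℝ) * (1 + Real.log ((n:ℝ) - 1)) ^ (j - 1) := by
    intro n hn
    refine (key n hn j hj).trans ?_
    have hH0 : (0:ℝ) ≤ (harmonic (n-1) : ℝ) := by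
      exact_mod_cast (harmonic_pos (n := n-1) (by omega)).le
    have hle : (harmonic (n-1) : ℝ) ≤ 1 + Real.log ((n:ℝ) - 1) := by
      have := harmonic_le_one_add_log (n-1)
      rwa [Nat.cast_sub (by omega), Nat.cast_one] at this
    have := pow_le_pow_left₀ hH0 hle (j-1)
    exact mul_le_mul_of_nonneg_left this (by positivity)
  refine ⟨part1, ?_⟩
  have hg : Tendsto (fun n : ℕ => (1 + Real.log (n:ℝ))^(j-1) / (n:ℝ)) atTop (𝓝 0) :=
    (tendsto_one_add_log_pow_div (j-1)).comp tendsto_natCast_atTop_atTop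
  refine squeeze_zero' ?_ ?_ hg
  · filter_upwards with n
    have := p_coeff_nonneg n (n - j)
    positivity
  · filter_upwards [eventually_ge_atTop 2] with n hn
    have hfac : ((n.factorial : ℕ) : ℝ) = (n:ℝ) * ((n-1).factorial : ℝ) := by
      rw_mod_cast [← Nat.mul_factorial_pred (by omega)]
    have hF : (0:ℝ) < ((n-1).factorial : ℝ) := by exact_mod_cast Nat.factorial_pos _
    have hnpos : (0:ℝ) < (n:ℝ) := by positivity
    have hlog0 : (0:ℝ) ≤ Real.log ((n:ℝ) - 1) := by
      apply Real.log_nonneg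
      have : (2:ℝ) ≤ n := by exact_mod_cast hn
      linarith
    have hmono : (1 + Real.log ((n:ℝ) - 1))^(j-1) ≤ (1 + Real.log (n:ℝ))^(j-1) := by
      refine pow_le_pow_left₀ (by linarith) ?_ _
      have h2 : (2:ℝ) ≤ n := by exact_mod_cast hn
      have := Real.log_le_log (by linarith) (by linarith : (n:ℝ) - 1 ≤ n)
      linarith
    calc (p n).coeff (n - j) / (n.factorial : ℝ)
        ≤ (((n-1).factorial : ℝ) * (1 + Real.log ((n:ℝ) - 1)) ^ (j - 1)) / (n.factorial : ℝ) := by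
          apply div_le_div_of_nonneg_right (part1 n hn) ?_
          exact_mod_cast (Nat.factorial_pos n).le
      _ = (1 + Real.log ((n:ℝ) - 1)) ^ (j - 1) / (n:ℝ) := by
          rw [hfac]
          field_simp
      _ ≤ (1 + Real.log (n:ℝ))^(j-1) / (n:ℝ) := div_le_div_of_nonneg_right hmono hnpos.le
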